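/- Fix integers 1 ≤ ℓ ≤ k and n ≥ k + 1. Let v_1,…,v_n be independent random variables where, for 1 ≤ i ≤ k+1, v_i takes the value x_i = i(2k−i+3)/2 with probability 1/x_i and the value 0 otherwise, and v_i = 0 almost surely for i > k+1. Then for every randomized online algorithm A with capacity k (with u an independent uniform seed), E[TOP_ℓ(A(u,v); v)] ≤ (1 − 1/(2k+2)!) · E[TOP_ℓ(v)]. -/

import Mathlib

open MeasureTheory ProbabilityTheory Finset

/-- `TOPval ℓ A v` is the maximum of `∑ i ∈ B, v i` over `B ⊆ A` with `|B| ≤ ℓ`. -/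
noncomputable def TOPval {n : ℕ} (ℓ : ℕ) (A : Finset (Fin n)) (v : Fin n → ℝ) : ℝ :=
  ((A.powerset.filter fun B => B.card ≤ ℓ).image fun B => ∑ i ∈ B, v i).max'
    (Finset.Nonempty.image
      ⟨∅, Finset.mem_filter.mpr ⟨Finset.empty_mem_powerset A, by simp⟩⟩ _)

/-- A randomized online algorithm with capacity `k`: it receives a uniform random seed
`u ∈ [0,1]` and an online value vector `v`, outputs a set of at most `k` indices, is online
in `v` (the decision about index `i` depends only on `v₁,…,vᵢ`), and is measurable. -/
structure OnlineAlg (n k : ℕ) where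
  run : ℝ → (Fin n → ℝ) → Finset (Fin n)
  card_le : ∀ u v, (run u v).card ≤ k
  online : ∀ u v w (i : Fin n), (∀ j : Fin n, j ≤ i → v j = w j) →
    (i ∈ run u v ↔ i ∈ run u w)
  meas : ∀ i : Fin n, MeasurableSet {p : ℝ × (Fin n → ℝ) | i ∈ run p.1 p.2}

/-- The value `xᵢ = i(2k−i+3)/2` (for the 1-based index `i = (i : ℕ) + 1` of `i : Fin n`). -/
noncomputable def hardValue (k : ℕ) {n : ℕ} (i : Fin n) : ℝ :=
  (((i : ℕ) : ℝ) + 1) * (2 * (k : ℝ) - (((i : ℕ) : ℝ) + 1) + 3) / 2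


lemma sum_le_TOPval {n ℓ : ℕ} {A B : Finset (Fin n)} {v : Fin n → ℝ}
    (hBA : B ⊆ A) (hB : B.card ≤ ℓ) : ∑ i ∈ B, v i ≤ TOPval ℓ A v := by
  unfold TOPval
  apply Finset.le_max'
  exact Finset.mem_image.2 ⟨B, Finset.mem_filter.2 ⟨Finset.mem_powerset.2 hBA, hB⟩, rfl⟩

lemma TOPval_exists_rep {n : ℕ} (ℓ : ℕ) (A : Finset (Fin n)) (v : Fin n → ℝ) :
    ∃ B, B ⊆ A ∧ B.card ≤ ℓ ∧ TOPval ℓ A v = ∑ i ∈ B, v i := by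
  obtain ⟨B, hB, hsum⟩ := Finset.mem_image.1 (Finset.max'_mem
    ((A.powerset.filter fun B => B.card ≤ ℓ).image fun B => ∑ i ∈ B, v i)
    (Finset.Nonempty.image
      ⟨∅, Finset.mem_filter.mpr ⟨Finset.empty_mem_powerset A, by simp⟩⟩ _))
  rw [Finset.mem_filter, Finset.mem_powerset] at hB
  exact ⟨B, hB.1, hB.2, hsum.symm⟩

lemma TOPval_nonneg {n ℓ : ℕ} (A : Finset (Fin n)) (v : Fin n → ℝ) : 0 ≤ TOPval ℓ A v := by
  simpa using sum_le_TOPval (B := (∅ : Finset (Fin n))) (A := A) (v := v)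
    (Finset.empty_subset A) (by simp)

lemma TOPval_mono {n ℓ : ℕ} {A A' : Finset (Fin n)} (v : Fin n → ℝ) (h : A ⊆ A') :
    TOPval ℓ A v ≤ TOPval ℓ A' v := by
  obtain ⟨B, hBA, hBc, hrep⟩ := TOPval_exists_rep ℓ A v
  rw [hrep]
  exact sum_le_TOPval (hBA.trans h) hBc

lemma TOPval_le_sum {n ℓ : ℕ} {A : Finset (Fin n)} {v : Fin n → ℝ} (hv : ∀ i, 0 ≤ v i) :
    TOPval ℓ A v ≤ ∑ i, v i := by
  obtain ⟨B, hBA, hBc, hrep⟩ := TOPval_exists_rep ℓ A v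
  rw [hrep]
  exact Finset.sum_le_sum_of_subset_of_nonneg (Finset.subset_univ B) fun i _ _ => hv i

lemma TOPval_gap {n ℓ : ℕ} {S : Finset (Fin n)} {w : Fin n → ℝ} {i : Fin n}
    (hℓ : 1 ≤ ℓ) (hiS : i ∉ S) (hwi : 1 ≤ w i) (hj : ∀ j, j ≠ i → w j + 1 ≤ w i) :
    TOPval ℓ S w + 1 ≤ TOPval ℓ Finset.univ w := by
  obtain ⟨B, hBS, hBc, hrep⟩ := TOPval_exists_rep ℓ S w
  have hiB : i ∉ B := fun h => hiS (hBS h)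
  rcases B.eq_empty_or_nonempty with rfl | ⟨j, hjB⟩
  · have h1 : ∑ x ∈ ({i} : Finset (Fin n)), w x ≤ TOPval ℓ Finset.univ w :=
      sum_le_TOPval (Finset.subset_univ _) (by simpa)
    rw [hrep]
    simp only [Finset.sum_singleton, Finset.sum_empty] at h1 ⊢
    linarith
  · have hji : j ≠ i := fun h => hiB (h ▸ hjB)
    have hie : i ∉ B.erase j := fun h => hiB (Finset.mem_of_mem_erase h)
    have hsum : ∑ x ∈ insert i (B.erase j), w x = w i + (∑ x ∈ B, w x - w j) := by
      rw [Finset.sum_insert hie, Finset.sum_erase_eq_sub hjB]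
    have hBpos : 1 ≤ B.card := Finset.card_pos.2 ⟨j, hjB⟩
    have hcard : (insert i (B.erase j)).card ≤ ℓ := by
      calc (insert i (B.erase j)).card ≤ (B.erase j).card + 1 := Finset.card_insert_le _ _
        _ = B.card - 1 + 1 := by rw [Finset.card_erase_of_mem hjB]
        _ = B.card := Nat.succ_pred_eq_of_pos hBpos
        _ ≤ ℓ := hBc
    have h1 : ∑ x ∈ insert i (B.erase j), w x ≤ TOPval ℓ Finset.univ w :=
      sum_le_TOPval (Finset.subset_univ _) hcard
    have h2 := hj j hji
    rw [hrep]
    rw [hsum] at h1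
    linarith

lemma TOPval_eq_sup' {n : ℕ} (ℓ : ℕ) (A : Finset (Fin n)) (v : Fin n → ℝ) :
    TOPval ℓ A v = (A.powerset.filter fun B => B.card ≤ ℓ).sup'
      ⟨∅, Finset.mem_filter.mpr ⟨Finset.empty_mem_powerset A, by simp⟩⟩
      (fun B => ∑ i ∈ B, v i) := by
  rw [TOPval, Finset.max'_eq_sup', Finset.sup'_image]
  rfl

lemma integrable_dirac'' (f : ℝ → ℝ) (a : ℝ) : Integrable f (Measure.dirac a) := by
  have h : f =ᵐ[Measure.dirac a] (fun _ => f a) := by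
    rw [Filter.EventuallyEq, MeasureTheory.ae_dirac_eq]
    exact Filter.eventually_pure.2 rfl
  exact (integrable_const (f a)).congr h.symm

lemma fact_aux : ∀ (a b : ℕ), a.factorial * ∏ m ∈ Finset.range b, (a + 1 + m) = (a + b).factorial
  | a, 0 => by simp
  | a, b + 1 => by
    rw [Finset.prod_range_succ, ← mul_assoc, fact_aux a b, ← Nat.add_assoc]
    rw [Nat.factorial_succ (a + b)]
    ring

-- basic numeric facts
lemma hardValue_ge_two {n k : ℕ} (hk : 1 ≤ k) (j : Fin n) (hj : (j : ℕ) < k + 1) :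
    2 ≤ hardValue k j := by
  have h1 : (1:ℝ) ≤ (k:ℝ) := by exact_mod_cast hk
  have hjk : ((j:ℕ):ℝ) ≤ (k:ℝ) := by exact_mod_cast Nat.lt_succ_iff.mp hj
  have h0 : (0:ℝ) ≤ ((j:ℕ):ℝ) := Nat.cast_nonneg _
  unfold hardValue
  nlinarith

lemma hardValue_gap {n k : ℕ} (i j : Fin n) (hi : (i : ℕ) < k + 1) (hji : (j : ℕ) < (i : ℕ)) :
    hardValue k j + 1 ≤ hardValue k i := by
  have h1 : ((j:ℕ):ℝ) + 1 ≤ ((i:ℕ):ℝ) := by exact_mod_cast hji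
  have h2 : ((i:ℕ):ℝ) ≤ (k:ℝ) := by exact_mod_cast Nat.lt_succ_iff.mp hi
  have h0 : (0:ℝ) ≤ ((j:ℕ):ℝ) := Nat.cast_nonneg _
  unfold hardValue
  nlinarith

lemma fact_aux' : ∀ (a b : ℕ), a.factorial * ∏ m ∈ Finset.range b, (a + 1 + m) = (a + b).factorial
  | a, 0 => by simp
  | a, b + 1 => by
    rw [Finset.prod_range_succ, ← mul_assoc, fact_aux' a b, ← Nat.add_assoc]
    rw [Nat.factorial_succ (a + b)]
    ring

lemma nat_prod_identity (k : ℕ) :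
    ∏ m ∈ Finset.range (k + 1), ((m + 1) * (2 * k + 2 - m)) = Nat.factorial (2 * k + 2) := by
  rw [Finset.prod_mul_distrib, Finset.prod_range_add_one_eq_factorial]
  have h1 : ∏ m ∈ Finset.range (k + 1), (2 * k + 2 - m) =
      ∏ m ∈ Finset.range (k + 1), (k + 1 + 1 + m) := by
    rw [← Finset.prod_range_reflect (fun m => 2 * k + 2 - m) (k + 1)]
    refine Finset.prod_congr rfl fun m hm => ?_
    rw [Finset.mem_range] at hm
    omega
  rw [h1, fact_aux' (k + 1) (k + 1)]
  congr 1
  omega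

lemma prod_hardValue {n k : ℕ} (hn : k + 1 ≤ n) :
    ∏ j ∈ Finset.univ.filter (fun j : Fin n => (j : ℕ) < k + 1), hardValue k j
      = (Nat.factorial (2 * k + 2) : ℝ) / 2 ^ (k + 1) := by
  have hKim : Finset.univ.filter (fun j : Fin n => (j : ℕ) < k + 1)
      = Finset.image (Fin.castLE hn) Finset.univ := by
    ext j
    simp only [Finset.mem_filter, Finset.mem_univ, true_and, Finset.mem_image]
    constructor
    · intro h; exact ⟨⟨(j : ℕ), h⟩, Fin.ext rfl⟩
    · rintro ⟨m, rfl⟩; exact m.isLt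
  rw [hKim, Finset.prod_image (fun a _ b _ h => Fin.castLE_injective hn h)]
  have hstep : ∏ x : Fin (k + 1), hardValue k (Fin.castLE hn x)
      = ∏ m ∈ Finset.range (k + 1), (((m : ℝ) + 1) * (2 * (k : ℝ) - ((m : ℝ) + 1) + 3) / 2) :=
    by exact Fin.prod_univ_eq_prod_range (fun m : ℕ => ((m : ℝ) + 1) * (2 * (k : ℝ) - ((m : ℝ) + 1) + 3) / 2) (k + 1)
  rw [hstep]
  have hterm : ∀ m ∈ Finset.range (k + 1),
      ((m : ℝ) + 1) * (2 * (k : ℝ) - ((m : ℝ) + 1) + 3) / 2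
        = ((((m + 1) * (2 * k + 2 - m) : ℕ)) : ℝ) / 2 := by
    intro m hm
    rw [Finset.mem_range] at hm
    have hle : m ≤ 2 * k + 2 := by omega
    push_cast [Nat.cast_sub hle]
    ring
  rw [Finset.prod_congr rfl hterm, Finset.prod_div_distrib, Finset.prod_const,
    Finset.card_range, ← Nat.cast_prod, nat_prod_identity]

set_option maxHeartbeats 1000000 in
/-- **Prophet impossibility with full distributional knowledge (Theorem 2.6 of
Ezra–Feldman–Nehama).**  Let `1 ≤ ℓ ≤ k` and `n ≥ k + 1`.  Let `v₁,…,vₙ` be independent,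
where for `1 ≤ i ≤ k+1` the variable `vᵢ` takes value `xᵢ = i(2k−i+3)/2` with probability
`1/xᵢ` and `0` otherwise, and `vᵢ = 0` a.s. for `i > k+1`.  Then every randomized online
algorithm `A` with capacity `k` (with independent uniform seed `u`) satisfies
`E[TOP_ℓ(A(u,v); v)] ≤ (1 − 1/(2k+2)!) · E[TOP_ℓ(v)]`. -/
theorem prophet_impossibility {Ω : Type*} [MeasurableSpace Ω] (μ : Measure Ω)
    [IsProbabilityMeasure μ]
    (n k ℓ : ℕ) (hℓ : 1 ≤ ℓ) (hℓk : ℓ ≤ k) (hn : k + 1 ≤ n)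
    (v : Fin n → Ω → ℝ)
    (hmeas : ∀ i, Measurable (v i))
    (hindep : iIndepFun v μ)
    (hlaw : ∀ i : Fin n, (i : ℕ) < k + 1 →
      μ.map (v i) =
        ENNReal.ofReal (1 / hardValue k i) • Measure.dirac (hardValue k i) +
          ENNReal.ofReal (1 - 1 / hardValue k i) • Measure.dirac (0 : ℝ))
    (hzero : ∀ i : Fin n, k + 1 ≤ (i : ℕ) → μ.map (v i) = Measure.dirac (0 : ℝ))
    (A : OnlineAlg n k) :
    ∫ p : ℝ × Ω, TOPval ℓ (A.run p.1 (fun i => v i p.2)) (fun i => v i p.2)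
        ∂((volume.restrict (Set.Icc (0 : ℝ) 1)).prod μ) ≤
      (1 - 1 / (Nat.factorial (2 * k + 2) : ℝ)) *
        ∫ ω, TOPval ℓ Finset.univ (fun i => v i ω) ∂μ := by
  classical
  have hk : 1 ≤ k := hℓ.trans hℓk
  haveI hlamP : IsProbabilityMeasure (volume.restrict (Set.Icc (0 : ℝ) 1)) :=
    ⟨by simp⟩
  set lam := volume.restrict (Set.Icc (0 : ℝ) 1) with hlam
  set π := lam.prod μ with hπ
  haveI : IsProbabilityMeasure π := by rw [hπ]; infer_instance
  set K : Finset (Fin n) := Finset.univ.filter (fun j : Fin n => (j : ℕ) < k + 1) with hKdef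
  have hmemK : ∀ j : Fin n, j ∈ K ↔ (j : ℕ) < k + 1 := by
    intro j; simp [hKdef]
  have hcardK : K.card = k + 1 := by
    have hKim : K = Finset.image (Fin.castLE hn) Finset.univ := by
      ext j
      simp only [hKdef, Finset.mem_filter, Finset.mem_univ, true_and, Finset.mem_image]
      constructor
      · intro h; exact ⟨⟨(j : ℕ), h⟩, Fin.ext rfl⟩
      · rintro ⟨m, rfl⟩; exact m.isLt
    rw [hKim, Finset.card_image_of_injective _ (Fin.castLE_injective hn),
      Finset.card_univ, Fintype.card_fin]
  -- the deterministic "all large" input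
  set wstar : Fin n → ℝ := fun j => if (j : ℕ) < k + 1 then hardValue k j else 0 with hwstar
  set R : ℝ → Finset (Fin n) := fun u => A.run u wstar with hR
  set W : Fin n → Set ℝ := fun i => {u | i ∉ R u ∧ ∀ j : Fin n, j < i → j ∈ R u} with hW
  have hmeasRun : ∀ j : Fin n, MeasurableSet {u : ℝ | j ∈ R u} := by
    intro j
    exact (measurable_id.prodMk measurable_const) (A.meas j)
  have hmeasW : ∀ i : Fin n, MeasurableSet (W i) := by
    intro i
    have hWeq : W i = {u : ℝ | i ∈ R u}ᶜ ∩ ⋂ j : Fin n, {u : ℝ | j < i → j ∈ R u} := by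
      ext u
      simp only [hW, Set.mem_setOf_eq, Set.mem_inter_iff, Set.mem_compl_iff, Set.mem_iInter]
    rw [hWeq]
    refine ((hmeasRun i).compl).inter (MeasurableSet.iInter fun j => ?_)
    by_cases h : j < i
    · simpa [h] using hmeasRun j
    · have : {u : ℝ | j < i → j ∈ R u} = Set.univ := by ext u; simp [h]
      rw [this]; exact MeasurableSet.univ
  have hcover : ∀ u : ℝ, ∃ i ∈ K, u ∈ W i := by
    intro u
    have hne : (K \ R u).Nonempty := by
      rw [← Finset.card_pos]
      have h1 := Finset.le_card_sdiff (R u) K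
      have h2 : (R u).card ≤ k := A.card_le u wstar
      omega
    set i := (K \ R u).min' hne with hidef
    have hi := Finset.min'_mem _ hne
    rw [← hidef, Finset.mem_sdiff] at hi
    refine ⟨i, hi.1, hi.2, ?_⟩
    intro j hj
    by_contra hjR
    have hjK : j ∈ K := by
      rw [hmemK]
      exact lt_trans hj ((hmemK i).mp hi.1)
    have hle : i ≤ j := Finset.min'_le _ _ (Finset.mem_sdiff.2 ⟨hjK, hjR⟩)
    exact absurd hj (not_lt.2 hle)
  have hdisj : ∀ i i' : Fin n, i ≠ i' → ∀ u : ℝ, u ∈ W i → u ∉ W i' := by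
    intro i i' hne u hu hu'
    rcases lt_or_gt_of_ne hne with h | h
    · exact hu.1 (hu'.2 i h)
    · exact hu'.1 (hu.2 i' h)
  -- events on Ω
  set E : Fin n → Set Ω :=
    fun i => ⋂ j ∈ K, v j ⁻¹' {if j ≤ i then hardValue k j else 0} with hE
  have hmeasE : ∀ i : Fin n, MeasurableSet (E i) := fun i =>
    MeasurableSet.biInter K.countable_toSet fun j _ => (hmeas j) (measurableSet_singleton _)
  -- singleton probabilities
  have hprob1 : ∀ j : Fin n, (j : ℕ) < k + 1 →
      μ (v j ⁻¹' {hardValue k j}) = ENNReal.ofReal (1 / hardValue k j) := by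
    intro j hj
    have hx := hardValue_ge_two (n := n) hk j hj
    have hxne : hardValue k j ≠ 0 := by linarith
    rw [← Measure.map_apply (hmeas j) (measurableSet_singleton _), hlaw j hj]
    simp [Measure.dirac_apply, Set.indicator, hxne, Ne.symm hxne]
  have hprob0 : ∀ j : Fin n, (j : ℕ) < k + 1 →
      μ (v j ⁻¹' {(0 : ℝ)}) = ENNReal.ofReal (1 - 1 / hardValue k j) := by
    intro j hj
    have hx := hardValue_ge_two (n := n) hk j hj
    have hxne : hardValue k j ≠ 0 := by linarith
    rw [← Measure.map_apply (hmeas j) (measurableSet_singleton _), hlaw j hj]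
    simp [Measure.dirac_apply, Set.indicator, hxne, Ne.symm hxne]
  -- measure lower bound for the events
  have hEbound : ∀ i : Fin n,
      ENNReal.ofReal (((k : ℝ) + 1) / (Nat.factorial (2 * k + 2) : ℝ)) ≤ μ (E i) := by
    intro i
    have hEeq : μ (E i) = ∏ j ∈ K, μ (v j ⁻¹' {if j ≤ i then hardValue k j else 0}) :=
      hindep.meas_biInter fun j _ =>
        ⟨{if j ≤ i then hardValue k j else 0}, measurableSet_singleton _, rfl⟩
    have hstep1 : ∀ j ∈ K, ENNReal.ofReal (1 / hardValue k j)
        ≤ μ (v j ⁻¹' {if j ≤ i then hardValue k j else 0}) := by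
      intro j hj
      have hjlt := (hmemK j).mp hj
      have hx := hardValue_ge_two (n := n) hk j hjlt
      by_cases hle : j ≤ i
      · rw [if_pos hle, hprob1 j hjlt]
      · rw [if_neg hle, hprob0 j hjlt]
        apply ENNReal.ofReal_le_ofReal
        have h12 : 1 / hardValue k j ≤ 1 / 2 := by
          apply one_div_le_one_div_of_le <;> linarith
        linarith
    have hstep2 : ∏ j ∈ K, ENNReal.ofReal (1 / hardValue k j)
        ≤ ∏ j ∈ K, μ (v j ⁻¹' {if j ≤ i then hardValue k j else 0}) :=
      Finset.prod_le_prod' hstep1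
    have hstep3 : ∏ j ∈ K, ENNReal.ofReal (1 / hardValue k j)
        = ENNReal.ofReal (∏ j ∈ K, (1 / hardValue k j)) := by
      rw [ENNReal.ofReal_prod_of_nonneg]
      intro j hj
      have hx := hardValue_ge_two (n := n) hk j ((hmemK j).mp hj)
      positivity
    have hps : ∏ j ∈ K, (1 / hardValue k j)
        = 2 ^ (k + 1) / (Nat.factorial (2 * k + 2) : ℝ) := by
      simp_rw [one_div]
      rw [Finset.prod_inv_distrib, hKdef, prod_hardValue hn, inv_div]
    have hnum : ((k : ℝ) + 1) ≤ 2 ^ (k + 1) := by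
      have := Nat.lt_two_pow_self (n := k + 1)
      have h2 : ((k + 1 : ℕ) : ℝ) ≤ ((2 ^ (k + 1) : ℕ) : ℝ) := by exact_mod_cast this.le
      push_cast at h2
      linarith
    have hfinal : ((k : ℝ) + 1) / (Nat.factorial (2 * k + 2) : ℝ)
        ≤ ∏ j ∈ K, (1 / hardValue k j) := by
      rw [hps]
      have hfp : (0 : ℝ) < (Nat.factorial (2 * k + 2) : ℝ) := by
        exact_mod_cast Nat.factorial_pos _
      gcongr
    calc ENNReal.ofReal (((k : ℝ) + 1) / (Nat.factorial (2 * k + 2) : ℝ))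
        ≤ ENNReal.ofReal (∏ j ∈ K, (1 / hardValue k j)) := ENNReal.ofReal_le_ofReal hfinal
      _ = ∏ j ∈ K, ENNReal.ofReal (1 / hardValue k j) := hstep3.symm
      _ ≤ _ := hstep2.trans_eq hEeq.symm
  -- integrals of the v j
  have hmapint : ∀ j : Fin n, Integrable id (μ.map (v j)) := by
    intro j
    by_cases hj : (j : ℕ) < k + 1
    · rw [hlaw j hj, integrable_add_measure]
      exact ⟨(integrable_dirac'' id _).smul_measure ENNReal.ofReal_ne_top,
        (integrable_dirac'' id _).smul_measure ENNReal.ofReal_ne_top⟩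
    · rw [hzero j (not_lt.mp hj)]
      exact integrable_dirac'' id _
  have hIntv : ∀ j : Fin n, Integrable (v j) μ := fun j =>
    (integrable_map_measure aestronglyMeasurable_id (hmeas j).aemeasurable).mp (hmapint j)
  have hEv : ∀ j : Fin n, ∫ ω, v j ω ∂μ = if (j : ℕ) < k + 1 then 1 else 0 := by
    intro j
    have h1 : ∫ y, id y ∂(μ.map (v j)) = ∫ ω, v j ω ∂μ := by
      rw [integral_map (hmeas j).aemeasurable aestronglyMeasurable_id]
      simp
    rw [← h1]
    by_cases hj : (j : ℕ) < k + 1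
    · have hx := hardValue_ge_two (n := n) hk j hj
      have hxne : hardValue k j ≠ 0 := by linarith
      rw [hlaw j hj,
        integral_add_measure ((integrable_dirac'' id _).smul_measure ENNReal.ofReal_ne_top)
          ((integrable_dirac'' id _).smul_measure ENNReal.ofReal_ne_top),
        integral_smul_measure, integral_smul_measure, integral_dirac, integral_dirac]
      simp only [id_eq, smul_eq_mul, mul_zero, add_zero, if_pos hj]
      rw [ENNReal.toReal_ofReal (by positivity), one_div, inv_mul_cancel₀ hxne]
    · rw [hzero j (not_lt.mp hj), integral_dirac]
      simp [hj]
  -- good set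
  set Good : Set Ω := {ω | ∀ j : Fin n,
      ((j : ℕ) < k + 1 → v j ω = hardValue k j ∨ v j ω = 0) ∧
      (k + 1 ≤ (j : ℕ) → v j ω = 0)} with hGood
  have hGoodeq : Good = ⋂ j : Fin n,
      v j ⁻¹' (if (j : ℕ) < k + 1 then ({hardValue k j, 0} : Set ℝ) else {0}) := by
    ext ω
    simp only [hGood, Set.mem_setOf_eq, Set.mem_iInter, Set.mem_preimage]
    refine forall_congr' fun j => ?_
    by_cases hj : (j : ℕ) < k + 1
    · rw [if_pos hj]
      simp only [Set.mem_insert_iff, Set.mem_singleton_iff]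
      constructor
      · intro h; exact h.1 hj
      · intro h; exact ⟨fun _ => h, fun h' => absurd hj (Nat.not_lt.mpr h')⟩
    · rw [if_neg hj]
      simp only [Set.mem_singleton_iff]
      constructor
      · intro h; exact h.2 (Nat.not_lt.mp hj)
      · intro h; exact ⟨fun h' => absurd h' hj, fun _ => h⟩
  have hsetmeas : ∀ j : Fin n,
      MeasurableSet (if (j : ℕ) < k + 1 then ({hardValue k j, 0} : Set ℝ) else {0}) := by
    intro j
    by_cases hj : (j : ℕ) < k + 1
    · rw [if_pos hj]; exact (measurableSet_singleton 0).insert _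
    · rw [if_neg hj]; exact measurableSet_singleton 0
  have hGoodmeas : MeasurableSet Good := by
    rw [hGoodeq]
    exact MeasurableSet.iInter fun j => (hmeas j) (hsetmeas j)
  have hGoodae : ∀ᵐ ω ∂μ, ω ∈ Good := by
    rw [hGoodeq]
    simp only [Set.mem_iInter]
    rw [MeasureTheory.ae_all_iff]
    intro j
    rw [ae_iff]
    have hseteq : {ω | ¬ ω ∈ v j ⁻¹'
        (if (j : ℕ) < k + 1 then ({hardValue k j, 0} : Set ℝ) else {0})}
        = v j ⁻¹' (if (j : ℕ) < k + 1 then ({hardValue k j, 0} : Set ℝ) else {0})ᶜ := rfl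
    rw [hseteq, ← Measure.map_apply (hmeas j) (hsetmeas j).compl]
    by_cases hj : (j : ℕ) < k + 1
    · rw [hlaw j hj]
      simp only [if_pos hj]
      simp [Measure.dirac_apply, Set.indicator]
    · rw [hzero j (not_lt.mp hj)]
      simp only [if_neg hj]
      simp [Measure.dirac_apply, Set.indicator]
  have hGoodnn : ∀ ω ∈ Good, ∀ j : Fin n, 0 ≤ v j ω := by
    intro ω hω j
    by_cases hj : (j : ℕ) < k + 1
    · rcases (hω j).1 hj with h | h
      · rw [h]; linarith [hardValue_ge_two (n := n) hk j hj]
      · rw [h]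
    · rw [(hω j).2 (not_lt.mp hj)]
  -- the functions
  set F : ℝ × Ω → ℝ :=
    fun p => TOPval ℓ (A.run p.1 (fun i => v i p.2)) (fun i => v i p.2) with hF
  set P : Ω → ℝ := fun ω => TOPval ℓ Finset.univ (fun i => v i ω) with hPdef
  set G : ℝ × Ω → ℝ := fun p => ∑ i ∈ K,
      (W i).indicator (fun _ => (1 : ℝ)) p.1 * (E i).indicator (fun _ => (1 : ℝ)) p.2 with hG
  -- pointwise key inequality
  have hkey : ∀ u : ℝ, ∀ ω ∈ Good, F (u, ω) ≤ P ω - G (u, ω) := by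
    intro u ω hω
    obtain ⟨i₀, hi₀K, hui₀⟩ := hcover u
    have hi₀lt : (i₀ : ℕ) < k + 1 := (hmemK i₀).mp hi₀K
    have hGval : G (u, ω) = (E i₀).indicator (fun _ => (1 : ℝ)) ω := by
      show (∑ i ∈ K, (W i).indicator (fun _ => (1 : ℝ)) u * (E i).indicator (fun _ => (1 : ℝ)) ω)
        = (E i₀).indicator (fun _ => (1 : ℝ)) ω
      rw [Finset.sum_eq_single i₀]
      · rw [Set.indicator_of_mem hui₀, one_mul]
      · intro b _ hbne
        rw [Set.indicator_of_notMem (hdisj i₀ b (Ne.symm hbne) u hui₀), zero_mul]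
      · intro h; exact absurd hi₀K h
    by_cases hωE : ω ∈ E i₀
    · rw [hGval, Set.indicator_of_mem hωE]
      have hval : ∀ j ∈ K, v j ω = if j ≤ i₀ then hardValue k j else 0 := by
        intro j hj
        have h := Set.mem_iInter₂.mp hωE j hj
        simpa using h
      have hvi₀ : v i₀ ω = hardValue k i₀ := by
        simpa using hval i₀ hi₀K
      have honline : ∀ j : Fin n, j ≤ i₀ → v j ω = wstar j := by
        intro j hji
        have hjlt : (j : ℕ) < k + 1 := lt_of_le_of_lt hji hi₀lt
        have hjK : j ∈ K := (hmemK j).mpr hjlt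
        rw [hval j hjK, if_pos hji]
        simp only [hwstar, if_pos hjlt]
      have hnotin : i₀ ∉ A.run u (fun i => v i ω) := by
        rw [A.online u (fun i => v i ω) wstar i₀ honline]
        exact hui₀.1
      have hwi : (1 : ℝ) ≤ v i₀ ω := by
        rw [hvi₀]; linarith [hardValue_ge_two (n := n) hk i₀ hi₀lt]
      have hjbound : ∀ j : Fin n, j ≠ i₀ → v j ω + 1 ≤ v i₀ ω := by
        intro j hjne
        rw [hvi₀]
        have hxi := hardValue_ge_two (n := n) hk i₀ hi₀lt
        by_cases hjK : j ∈ K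
        · rw [hval j hjK]
          by_cases hle : j ≤ i₀
          · rw [if_pos hle]
            have hlt : (j : ℕ) < (i₀ : ℕ) :=
              lt_of_le_of_ne hle fun h => hjne (Fin.ext h)
            exact hardValue_gap i₀ j hi₀lt hlt
          · rw [if_neg hle]; linarith
        · have hz : v j ω = 0 := (hω j).2 (Nat.not_lt.mp fun h => hjK ((hmemK j).mpr h))
          rw [hz]; linarith
      have hgap := TOPval_gap (S := A.run u (fun i => v i ω)) (w := fun i => v i ω)
        hℓ hnotin hwi hjbound
      have hFP : F (u, ω) = TOPval ℓ (A.run u (fun i => v i ω)) (fun i => v i ω) := rfl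
      have hPP : P ω = TOPval ℓ Finset.univ (fun i => v i ω) := rfl
      rw [hFP, hPP]
      linarith
    · rw [hGval, Set.indicator_of_notMem hωE]
      have hm := TOPval_mono (ℓ := ℓ) (fun i => v i ω)
        (Finset.subset_univ (A.run u (fun i => v i ω)))
      have hFP : F (u, ω) = TOPval ℓ (A.run u (fun i => v i ω)) (fun i => v i ω) := rfl
      have hPP : P ω = TOPval ℓ Finset.univ (fun i => v i ω) := rfl
      rw [hFP, hPP]
      linarith
  -- measurability / integrability
  have hPmeas : Measurable P := by
    have hrew : P = fun ω => (Finset.univ.powerset.filter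
        fun B : Finset (Fin n) => B.card ≤ ℓ).sup'
        ⟨∅, Finset.mem_filter.mpr ⟨Finset.empty_mem_powerset _, by simp⟩⟩
        (fun B => ∑ i ∈ B, v i ω) := by
      funext ω
      exact TOPval_eq_sup' ℓ Finset.univ _
    have hrew2 : P = (Finset.univ.powerset.filter
        fun B : Finset (Fin n) => B.card ≤ ℓ).sup'
        ⟨∅, Finset.mem_filter.mpr ⟨Finset.empty_mem_powerset _, by simp⟩⟩
        (fun B ω => ∑ i ∈ B, v i ω) := by
      rw [hrew]; funext ω; exact (Finset.sup'_apply (C := fun _ : Ω => ℝ) (f := fun B ω => ∑ i ∈ B, v i ω) (b := ω) _).symm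
    rw [hrew2]
    exact Finset.measurable_sup' _ fun B _ => Finset.measurable_sum B fun i _ => hmeas i
  have hsumInt : Integrable (fun ω => ∑ j, v j ω) μ :=
    integrable_finset_sum _ fun j _ => hIntv j
  have hPint : Integrable P μ := by
    refine hsumInt.mono hPmeas.aestronglyMeasurable ?_
    filter_upwards [hGoodae] with ω hω
    have h0 : 0 ≤ P ω := TOPval_nonneg _ _
    have h1 : P ω ≤ ∑ j, v j ω := TOPval_le_sum (hGoodnn ω hω)
    have h2 : (0 : ℝ) ≤ ∑ j, v j ω := Finset.sum_nonneg fun j _ => hGoodnn ω hω j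
    rw [Real.norm_eq_abs, Real.norm_eq_abs, abs_of_nonneg h0, abs_of_nonneg h2]
    exact h1
  have hindint : ∀ i : Fin n, Integrable (fun p : ℝ × Ω =>
      (W i).indicator (fun _ => (1 : ℝ)) p.1 * (E i).indicator (fun _ => (1 : ℝ)) p.2) π := by
    intro i
    have h1 : Integrable ((W i).indicator (fun _ => (1 : ℝ))) lam := by
      rw [integrable_indicator_iff (hmeasW i)]
      exact integrableOn_const (measure_ne_top _ _)
    have h2 : Integrable ((E i).indicator (fun _ => (1 : ℝ))) μ := by
      rw [integrable_indicator_iff (hmeasE i)]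
      exact integrableOn_const (measure_ne_top _ _)
    exact h1.mul_prod h2
  have hGint : Integrable G π := by
    have : G = fun p => ∑ i ∈ K,
        (W i).indicator (fun _ => (1 : ℝ)) p.1 * (E i).indicator (fun _ => (1 : ℝ)) p.2 := rfl
    rw [this]
    exact integrable_finset_sum _ fun i _ => hindint i
  have hPle : ∫ ω, P ω ∂μ ≤ (k : ℝ) + 1 := by
    have h1 : ∫ ω, P ω ∂μ ≤ ∫ ω, ∑ j, v j ω ∂μ := by
      refine integral_mono_ae hPint hsumInt ?_
      filter_upwards [hGoodae] with ω hω
      exact TOPval_le_sum (hGoodnn ω hω)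
    rw [integral_finset_sum _ fun j _ => hIntv j] at h1
    have h2 : ∑ j, ∫ ω, v j ω ∂μ = ((k : ℕ) : ℝ) + 1 := by
      simp_rw [hEv]
      rw [← Finset.sum_filter (fun j : Fin n => (j : ℕ) < k + 1) (fun _ => (1 : ℝ))]
      rw [← hKdef, Finset.sum_const, hcardK, nsmul_eq_mul]
      push_cast
      ring
    rw [h2] at h1
    exact h1
  have hPnn : 0 ≤ ∫ ω, P ω ∂μ := integral_nonneg fun ω => TOPval_nonneg _ _
  have hGlb : ((k : ℝ) + 1) / (Nat.factorial (2 * k + 2) : ℝ) ≤ ∫ p, G p ∂π := by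
    have hGeq : ∫ p, G p ∂π = ∑ i ∈ K, (lam (W i)).toReal * (μ (E i)).toReal := by
      have h0 : ∫ p, G p ∂π = ∑ i ∈ K, ∫ p, (W i).indicator (fun _ => (1 : ℝ)) p.1 *
          (E i).indicator (fun _ => (1 : ℝ)) p.2 ∂π := by
        have : G = fun p => ∑ i ∈ K,
            (W i).indicator (fun _ => (1 : ℝ)) p.1 * (E i).indicator (fun _ => (1 : ℝ)) p.2 := rfl
        rw [this]
        exact integral_finset_sum _ fun i _ => hindint i
      rw [h0]
      refine Finset.sum_congr rfl fun i _ => ?_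
      rw [hπ, integral_prod_mul]
      congr 1
      · exact integral_indicator_one (hmeasW i)
      · exact integral_indicator_one (hmeasE i)
    rw [hGeq]
    have hfactnn : (0 : ℝ) ≤ (Nat.factorial (2 * k + 2) : ℝ) := by positivity
    set c : ℝ := ((k : ℝ) + 1) / (Nat.factorial (2 * k + 2) : ℝ) with hc
    have hcnn : 0 ≤ c := by
      apply div_nonneg _ hfactnn
      positivity
    have hEi : ∀ i ∈ K, c ≤ (μ (E i)).toReal := by
      intro i _
      have h1 := ENNReal.toReal_mono (measure_ne_top μ (E i)) (hEbound i)
      rwa [ENNReal.toReal_ofReal hcnn] at h1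
    have hsum1 : (1 : ℝ) ≤ ∑ i ∈ K, (lam (W i)).toReal := by
      have hunion : (Set.univ : Set ℝ) ⊆ ⋃ i ∈ K, W i := by
        intro u _
        obtain ⟨i, hiK, hiW⟩ := hcover u
        exact Set.mem_biUnion hiK hiW
      have h2 : (1 : ENNReal) ≤ ∑ i ∈ K, lam (W i) := by
        calc (1 : ENNReal) = lam Set.univ := measure_univ.symm
          _ ≤ lam (⋃ i ∈ K, W i) := measure_mono hunion
          _ ≤ ∑ i ∈ K, lam (W i) := measure_biUnion_finset_le K W
      have hne : ∀ i ∈ K, lam (W i) ≠ ⊤ := fun i _ => measure_ne_top _ _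
      have h3 : ((1 : ENNReal)).toReal ≤ (∑ i ∈ K, lam (W i)).toReal := by
        apply ENNReal.toReal_mono _ h2
        exact (ENNReal.sum_lt_top.mpr fun i hi => lt_of_le_of_ne le_top (hne i hi)).ne
      rwa [ENNReal.toReal_one, ENNReal.toReal_sum hne] at h3
    calc c = 1 * c := (one_mul c).symm
      _ ≤ (∑ i ∈ K, (lam (W i)).toReal) * c := mul_le_mul_of_nonneg_right hsum1 hcnn
      _ = ∑ i ∈ K, (lam (W i)).toReal * c := Finset.sum_mul _ _ _
      _ ≤ ∑ i ∈ K, (lam (W i)).toReal * (μ (E i)).toReal := by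
        refine Finset.sum_le_sum fun i hi => ?_
        exact mul_le_mul_of_nonneg_left (hEi i hi) ENNReal.toReal_nonneg
  have hfactpos : (0 : ℝ) < (Nat.factorial (2 * k + 2) : ℝ) := by
    exact_mod_cast Nat.factorial_pos _
  by_cases hFint : Integrable F π
  · -- main case
    have hmapsnd : π.map Prod.snd = μ := by
      rw [hπ, Measure.map_snd_prod, measure_univ, one_smul]
    have hPmap : Integrable P (π.map Prod.snd) := by rw [hmapsnd]; exact hPint
    have hPsnd : Integrable (fun p : ℝ × Ω => P p.2) π :=
      (integrable_map_measure hPmap.1 measurable_snd.aemeasurable).mp hPmap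
    have hintegral_snd : ∫ p, P p.2 ∂π = ∫ ω, P ω ∂μ := by
      rw [← integral_map measurable_snd.aemeasurable hPmap.1, hmapsnd]
    have hae : ∀ᵐ p ∂π, F p ≤ P p.2 - G p := by
      have hnull : π {p : ℝ × Ω | p.2 ∉ Good} = 0 := by
        have hseteq : {p : ℝ × Ω | p.2 ∉ Good} = (Set.univ : Set ℝ) ×ˢ Goodᶜ := by
          ext p; simp [Set.mem_prod]
        have hμc : μ Goodᶜ = 0 := by
          have := hGoodae
          rw [ae_iff] at this
          exact this
        rw [hseteq, hπ, Measure.prod_prod, hμc, mul_zero]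
      have hmem : ∀ᵐ p ∂π, p.2 ∈ Good := by
        rw [ae_iff]
        exact hnull
      filter_upwards [hmem] with p hp
      exact hkey p.1 p.2 hp
    have h1 : ∫ p, F p ∂π ≤ ∫ p, (P p.2 - G p) ∂π :=
      integral_mono_ae hFint (hPsnd.sub hGint) hae
    rw [integral_sub hPsnd hGint, hintegral_snd] at h1
    have h2 : ∫ p, F p ∂π ≤ ∫ ω, P ω ∂μ - ((k : ℝ) + 1) / (Nat.factorial (2 * k + 2) : ℝ) := by
      linarith
    have h3 : (1 / (Nat.factorial (2 * k + 2) : ℝ)) * ∫ ω, P ω ∂μ ≤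
        ((k : ℝ) + 1) / (Nat.factorial (2 * k + 2) : ℝ) := by
      rw [div_eq_mul_one_div ((k : ℝ) + 1)]
      rw [mul_comm ((k : ℝ) + 1)]
      exact mul_le_mul_of_nonneg_left hPle (by positivity)
    calc ∫ p, F p ∂π ≤ ∫ ω, P ω ∂μ - ((k : ℝ) + 1) / (Nat.factorial (2 * k + 2) : ℝ) := h2
      _ ≤ ∫ ω, P ω ∂μ - (1 / (Nat.factorial (2 * k + 2) : ℝ)) * ∫ ω, P ω ∂μ := by linarith
      _ = (1 - 1 / (Nat.factorial (2 * k + 2) : ℝ)) * ∫ ω, P ω ∂μ := by ring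
  · rw [integral_undef hFint]
    have hfle : 1 / (Nat.factorial (2 * k + 2) : ℝ) ≤ 1 := by
      rw [div_le_one hfactpos]
      exact_mod_cast Nat.one_le_iff_ne_zero.mpr (Nat.factorial_ne_zero _)
    exact mul_nonneg (by linarith) hPnn
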